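/- For every integer n ≥ 1, the inequality 2n·C(2n−1, n) + Σ_{i=n}^{2n} C(2n, i) < (2n+1)·C(2n, n) holds, where C denotes the binomial coefficient. -/

import Mathlib

open Pointwise Matrix

/-- Ambient space `ℝ^d`. -/
abbrev E (d : ℕ) := Fin d → ℝ

/-- A point of the lattice `M ≅ ℤ^d`. -/
def IsLatticePt {d : ℕ} (x : E d) : Prop := ∀ i, ∃ n : ℤ, x i = (n : ℝ)

/-- The standard pairing between `N_ℝ` and `M_ℝ`. -/
def dot {d : ℕ} (x y : E d) : ℝ := ∑ i, x i * y i

/-- The dual (polar) polytope `P* = {x : ⟨x,y⟩ ≥ -1 ∀ y ∈ P}`. -/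
def polarDual {d : ℕ} (P : Set (E d)) : Set (E d) := {x | ∀ y ∈ P, -1 ≤ dot x y}

/-- A lattice polytope: convex hull of finitely many lattice points. -/
def IsLatticePolytope {d : ℕ} (P : Set (E d)) : Prop :=
  ∃ S : Finset (E d), (∀ x ∈ S, IsLatticePt x) ∧ P = convexHull ℝ (S : Set (E d))

/-- A reflexive polytope: a lattice polytope with `0` in its interior whose polar dual is
again a lattice polytope (i.e. the hull of its lattice points). -/
def IsReflexive {d : ℕ} (P : Set (E d)) : Prop :=
  IsLatticePolytope P ∧ 0 ∈ interior P ∧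
    polarDual P = convexHull ℝ {x | x ∈ polarDual P ∧ IsLatticePt x}

/-- A facet: a nonempty exposed face of dimension `d - 1`. -/
def IsFacet {d : ℕ} (P F : Set (E d)) : Prop :=
  IsExposed ℝ P F ∧ F.Nonempty ∧
    Module.finrank ℝ (affineSpan ℝ F).direction = d - 1

/-- Simplicial polytope: every facet is a simplex (hull of `d` affinely independent points). -/
def IsSimplicial {d : ℕ} (P : Set (E d)) : Prop :=
  ∀ F, IsFacet P F → ∃ v : Fin d → E d,
    AffineIndependent ℝ v ∧ F = convexHull ℝ (Set.range v)

/-- Pseudo-symmetric: some facet `F` has `-F` also a facet. -/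
def IsPseudoSymmetric {d : ℕ} (P : Set (E d)) : Prop :=
  ∃ F, IsFacet P F ∧ IsFacet P (-F)

/-- Application of an integer matrix to a point of `ℝ^d`. -/
def applyU {d : ℕ} (U : Matrix (Fin d) (Fin d) ℤ) (x : E d) : E d :=
  (U.map (Int.cast : ℤ → ℝ)) *ᵥ x

/-- Wirth matrix: block form `[[2·Id_f, 0], [C, Id_{d-f}]]` with `C` a `{0,1}`-matrix
each of whose columns has an odd number of `1`'s. -/
def IsWirth {d : ℕ} (A : Matrix (Fin d) (Fin d) ℤ) : Prop :=
  ∃ f : ℕ, f < d ∧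
    (∀ i j : Fin d, (i : ℕ) < f → (j : ℕ) < f → A i j = if i = j then 2 else 0) ∧
    (∀ i j : Fin d, (i : ℕ) < f → f ≤ (j : ℕ) → A i j = 0) ∧
    (∀ i j : Fin d, f ≤ (i : ℕ) → (j : ℕ) < f → A i j = 0 ∨ A i j = 1) ∧
    (∀ i j : Fin d, f ≤ (i : ℕ) → f ≤ (j : ℕ) → A i j = if i = j then 1 else 0) ∧
    (∀ j : Fin d, (j : ℕ) < f →
      Odd (Finset.univ.filter (fun i : Fin d => f ≤ (i : ℕ) ∧ A i j = 1)).card)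

lemma lem1_aux (m : ℕ) : 2 * Nat.choose (2 * (m+1) - 1) (m+1) = Nat.choose (2 * (m+1)) (m+1) := by
  have h1 : 2 * (m+1) - 1 = 2*m+1 := by omega
  have h2 : 2 * (m+1) = (2*m+1)+1 := by omega
  rw [h1, h2, Nat.choose_succ_succ (2*m+1) m, Nat.choose_symm_half]
  omega

lemma lem2_aux (n : ℕ) (hn : 1 ≤ n) :
    2 * ∑ i ∈ Finset.Icc n (2*n), Nat.choose (2*n) i = 4^n + Nat.choose (2*n) n := by
  have hA : (∑ i ∈ Finset.range n, Nat.choose (2*n) i)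
      + ∑ i ∈ Finset.Icc n (2*n), Nat.choose (2*n) i = 4^n := by
    rw [Finset.range_eq_Ico, ← Finset.Ico_add_one_right_eq_Icc,
      Finset.sum_Ico_consecutive _ (by omega) (by omega), ← Finset.range_eq_Ico,
      Nat.sum_range_choose, pow_mul]
    norm_num
  have hB : (∑ i ∈ Finset.range n, Nat.choose (2*n) i)
      = ∑ i ∈ Finset.Icc (n+1) (2*n), Nat.choose (2*n) i := by
    apply Finset.sum_nbij' (fun i => 2*n - i) (fun j => 2*n - j)
    · intro a ha; simp at ha ⊢; omega
    · intro a ha; simp at ha ⊢; omega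
    · intro a ha; simp at ha; omega
    · intro a ha; simp at ha; omega
    · intro a ha; simp at ha
      rw [Nat.choose_symm (by omega)]
  have hC : ∑ i ∈ Finset.Icc n (2*n), Nat.choose (2*n) i
      = Nat.choose (2*n) n + ∑ i ∈ Finset.Icc (n+1) (2*n), Nat.choose (2*n) i := by
    rw [← Finset.Ico_add_one_right_eq_Icc, ← Finset.Ico_add_one_right_eq_Icc,
      Finset.sum_eq_sum_Ico_succ_bot (by omega)]
  omega

lemma lem3_aux (n : ℕ) (hn : 1 ≤ n) : 4^n < (2*n+1) * Nat.choose (2*n) n := by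
  rcases lt_or_ge n 4 with h | h
  · interval_cases n <;> decide
  · calc 4^n < n * Nat.centralBinom n := Nat.four_pow_lt_mul_centralBinom n h
    _ ≤ (2*n+1) * Nat.choose (2*n) n := by
        unfold Nat.centralBinom; exact Nat.mul_le_mul_right _ (by omega)

theorem pseudo_delPezzo_facets_lt_delPezzo_facets (n : ℕ) (hn : 1 ≤ n) :
    2 * n * Nat.choose (2 * n - 1) n + ∑ i ∈ Finset.Icc n (2 * n), Nat.choose (2 * n) i
      < (2 * n + 1) * Nat.choose (2 * n) n := by
  obtain ⟨m, rfl⟩ : ∃ m, n = m + 1 := ⟨n - 1, by omega⟩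
  have h1 := lem1_aux m
  have h2 := lem2_aux (m+1) (by omega)
  have h3 := lem3_aux (m+1) (by omega)
  nlinarith [h1, h2, h3]
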